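/- Let R be a principal ideal domain and let M be a finitely presented R-module. Then there exist a natural number n and elements a₁, …, aₙ of R with aᵢ dividing aᵢ₊₁ for each i < n, such that M is isomorphic as an R-module to the direct sum (R/(a₁)) ⊕ (R/(a₂)) ⊕ ⋯ ⊕ (R/(aₙ)). -/

import Mathlib

section PiHelpers

variable {R : Type} [CommRing R]

/-- Split off the first factor of a finite product of modules. -/
noncomputable def piSplitAux {k : ℕ} (φ : Fin (k+1) → Type) [∀ i, AddCommGroup (φ i)]
    [∀ i, Module R (φ i)] : (∀ i, φ i) ≃ₗ[R] φ 0 × ∀ i : Fin k, φ i.succ :=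
  LinearEquiv.ofLinear
    ((LinearMap.proj 0).prod (LinearMap.pi fun i => LinearMap.proj i.succ))
    (LinearMap.pi (Fin.cases (LinearMap.fst R _ _)
      (fun i => (LinearMap.proj i).comp (LinearMap.snd R _ _))))
    (by ext x <;> simp)
    (by
      refine LinearMap.ext fun x => funext fun i => ?_
      induction i using Fin.cases <;> simp)

/-- Combine a product of two products of modules into one product over a sum type. -/
noncomputable def piSumAux {α β : Type} (φ : α ⊕ β → Type) [∀ i, AddCommGroup (φ i)]
    [∀ i, Module R (φ i)] :
    ((∀ a, φ (Sum.inl a)) × ∀ b, φ (Sum.inr b)) ≃ₗ[R] ∀ s, φ s :=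
  LinearEquiv.ofLinear
    (LinearMap.pi fun s => Sum.rec (motive := fun s => _ →ₗ[R] φ s)
      (fun a => (LinearMap.proj a).comp (LinearMap.fst R _ _))
      (fun b => (LinearMap.proj b).comp (LinearMap.snd R _ _)) s)
    ((LinearMap.pi fun a => LinearMap.proj (Sum.inl a)).prod
      (LinearMap.pi fun b => LinearMap.proj (Sum.inr b)))
    (by refine LinearMap.ext fun x => funext fun s => ?_; cases s <;> simp)
    (by ext x <;> simp)

end PiHelpers

section Chain

variable {R : Type} [CommRing R] [IsDomain R] [IsPrincipalIdealRing R]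

/-- A divisibility chain. -/
def DivChainAux {m : ℕ} (c : Fin m → R) : Prop :=
  ∀ (i : ℕ) (h : i + 1 < m), c ⟨i, Nat.lt_of_succ_lt h⟩ ∣ c ⟨i + 1, h⟩

omit [IsDomain R] [IsPrincipalIdealRing R] in
lemma DivChainAux.dvd_of_le {m : ℕ} {c : Fin m → R} (hc : DivChainAux c) {i j : Fin m}
    (hij : i ≤ j) : c i ∣ c j := by
  obtain ⟨i, hi⟩ := i
  obtain ⟨j, hj⟩ := j
  simp only [Fin.mk_le_mk] at hij
  obtain ⟨k, rfl⟩ := Nat.exists_eq_add_of_le hij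
  clear hij
  induction k with
  | zero => exact dvd_refl _
  | succ k ih =>
    have hj' : i + k < m := by omega
    exact (ih hj').trans (hc (i + k) (by omega))

/-- The key "Smith normal form" swap: `R/(x) × R/(y) ≅ R/(g) × R/(l)` where `g` is a gcd
and `l` an lcm of `x` and `y`. -/
lemma swap_step_aux (x y : R) : ∃ g l : R, g ∣ x ∧ g ∣ y ∧ x ∣ l ∧ y ∣ l ∧
    (∀ d : R, d ∣ x → d ∣ y → d ∣ g) ∧
    Nonempty (((R ⧸ Ideal.span {x}) × (R ⧸ Ideal.span {y})) ≃ₗ[R]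
      ((R ⧸ Ideal.span {g}) × (R ⧸ Ideal.span {l}))) := by
  classical
  obtain ⟨g, hg⟩ := (inferInstance : (Ideal.span {x, y}).IsPrincipal)
  have hxI : x ∈ Ideal.span {x, y} := Ideal.subset_span (by simp)
  have hyI : y ∈ Ideal.span {x, y} := Ideal.subset_span (by simp)
  have hgx : g ∣ x := by
    rw [← Ideal.mem_span_singleton]; rw [hg] at hxI; exact hxI
  have hgy : g ∣ y := by
    rw [← Ideal.mem_span_singleton]; rw [hg] at hyI; exact hyI
  obtain ⟨u, v, huv⟩ : ∃ u v : R, u * x + v * y = g := by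
    have hgmem : g ∈ Ideal.span {x, y} := by
      rw [hg]; exact Ideal.mem_span_singleton_self g
    exact Ideal.mem_span_pair.mp hgmem
  have hdvdg : ∀ d : R, d ∣ x → d ∣ y → d ∣ g := fun d hdx hdy =>
    huv ▸ dvd_add (hdx.mul_left u) (hdy.mul_left v)
  by_cases hg0 : g = 0
  · have hx0 : x = 0 := by simpa [hg0] using hgx
    have hy0 : y = 0 := by simpa [hg0] using hgy
    subst hx0 hy0
    exact ⟨0, 0, dvd_zero 0, dvd_zero 0, dvd_zero 0, dvd_zero 0,
      fun d _ h => h, ⟨LinearEquiv.refl _ _⟩⟩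
  obtain ⟨b₁, hb₁⟩ := hgx
  obtain ⟨c₁, hc₁⟩ := hgy
  have key : u * b₁ + v * c₁ = 1 := by
    have h2 : g * (u * b₁ + v * c₁) = g * 1 := by
      linear_combination huv - u * hb₁ - v * hc₁
    exact mul_left_cancel₀ hg0 h2
  refine ⟨g, g * b₁ * c₁, ⟨b₁, hb₁⟩, ⟨c₁, hc₁⟩, ⟨c₁, by rw [hb₁]⟩,
    ⟨b₁, by rw [hc₁]; ring⟩, hdvdg, ?_⟩
  set Ix := Ideal.span {x} with hIx
  set Iy := Ideal.span {y} with hIy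
  set Ig := Ideal.span {g} with hIg
  set Il := Ideal.span {g * b₁ * c₁} with hIl
  have kx : Ix ≤ LinearMap.ker ((u • Ig.mkQ).prod ((-c₁) • Il.mkQ)) := by
    rw [hIx, Ideal.span_singleton_le_iff_mem, LinearMap.mem_ker]
    simp only [LinearMap.prod_apply, Function.prod, LinearMap.smul_apply, Submodule.mkQ_apply,
      ← Submodule.Quotient.mk_smul, smul_eq_mul, Prod.mk_eq_zero,
      Submodule.Quotient.mk_eq_zero, hIg, hIl, Ideal.mem_span_singleton]
    exact ⟨(Dvd.intro b₁ hb₁.symm).mul_left u, ⟨-1, by rw [hb₁]; ring⟩⟩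
  have ky : Iy ≤ LinearMap.ker ((v • Ig.mkQ).prod (b₁ • Il.mkQ)) := by
    rw [hIy, Ideal.span_singleton_le_iff_mem, LinearMap.mem_ker]
    simp only [LinearMap.prod_apply, Function.prod, LinearMap.smul_apply, Submodule.mkQ_apply,
      ← Submodule.Quotient.mk_smul, smul_eq_mul, Prod.mk_eq_zero,
      Submodule.Quotient.mk_eq_zero, hIg, hIl, Ideal.mem_span_singleton]
    exact ⟨(Dvd.intro c₁ hc₁.symm).mul_left v, ⟨1, by rw [hc₁]; ring⟩⟩
  have kg : Ig ≤ LinearMap.ker ((b₁ • Ix.mkQ).prod (c₁ • Iy.mkQ)) := by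
    rw [hIg, Ideal.span_singleton_le_iff_mem, LinearMap.mem_ker]
    simp only [LinearMap.prod_apply, Function.prod, LinearMap.smul_apply, Submodule.mkQ_apply,
      ← Submodule.Quotient.mk_smul, smul_eq_mul, Prod.mk_eq_zero,
      Submodule.Quotient.mk_eq_zero, hIx, hIy, Ideal.mem_span_singleton]
    exact ⟨⟨1, by rw [hb₁]; ring⟩, ⟨1, by rw [hc₁]; ring⟩⟩
  have kl : Il ≤ LinearMap.ker (((-v) • Ix.mkQ).prod (u • Iy.mkQ)) := by
    rw [hIl, Ideal.span_singleton_le_iff_mem, LinearMap.mem_ker]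
    simp only [LinearMap.prod_apply, Function.prod, LinearMap.smul_apply, Submodule.mkQ_apply,
      ← Submodule.Quotient.mk_smul, smul_eq_mul, Prod.mk_eq_zero,
      Submodule.Quotient.mk_eq_zero, hIx, hIy, Ideal.mem_span_singleton]
    exact ⟨⟨-(v * c₁), by rw [hb₁]; ring⟩, ⟨u * b₁, by rw [hc₁]; ring⟩⟩
  refine ⟨LinearEquiv.ofLinear
    (LinearMap.coprod (Ix.liftQ _ kx) (Iy.liftQ _ ky))
    (LinearMap.coprod (Ig.liftQ _ kg) (Il.liftQ _ kl)) ?_ ?_⟩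
  · refine LinearMap.ext fun p => ?_
    obtain ⟨w, z⟩ := p
    obtain ⟨w, rfl⟩ := Ig.mkQ_surjective w
    obtain ⟨z, rfl⟩ := Il.mkQ_surjective z
    simp only [LinearMap.comp_apply, LinearMap.coprod_apply, Submodule.mkQ_apply,
      Submodule.liftQ_apply, LinearMap.prod_apply, Function.prod, LinearMap.smul_apply,
      ← Submodule.Quotient.mk_smul, smul_eq_mul, Prod.mk_add_mk,
      ← Submodule.Quotient.mk_add, LinearMap.id_apply, Prod.mk.injEq]
    constructor
    · rw [Submodule.Quotient.eq, hIg, Ideal.mem_span_singleton]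
      exact ⟨0, by linear_combination w * key⟩
    · rw [Submodule.Quotient.eq, hIl, Ideal.mem_span_singleton]
      exact ⟨0, by linear_combination z * key⟩
  · refine LinearMap.ext fun p => ?_
    obtain ⟨w, z⟩ := p
    obtain ⟨w, rfl⟩ := Ix.mkQ_surjective w
    obtain ⟨z, rfl⟩ := Iy.mkQ_surjective z
    simp only [LinearMap.comp_apply, LinearMap.coprod_apply, Submodule.mkQ_apply,
      Submodule.liftQ_apply, LinearMap.prod_apply, Function.prod, LinearMap.smul_apply,
      ← Submodule.Quotient.mk_smul, smul_eq_mul, Prod.mk_add_mk,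
      ← Submodule.Quotient.mk_add, LinearMap.id_apply, Prod.mk.injEq]
    constructor
    · rw [Submodule.Quotient.eq, hIx, Ideal.mem_span_singleton]
      exact ⟨0, by linear_combination w * key⟩
    · rw [Submodule.Quotient.eq, hIy, Ideal.mem_span_singleton]
      exact ⟨0, by linear_combination z * key⟩

/-- Inserting an element into a divisibility chain. -/
lemma insert_chain_aux : ∀ (m : ℕ) (c : Fin m → R), DivChainAux c → ∀ x : R,
    ∃ a : Fin (m + 1) → R, DivChainAux a ∧
      (∀ d : R, d ∣ x → (∀ i, d ∣ c i) → d ∣ a 0) ∧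
      Nonempty (((R ⧸ Ideal.span {x}) × ∀ i, R ⧸ Ideal.span {c i}) ≃ₗ[R]
        ∀ i : Fin (m + 1), R ⧸ Ideal.span {a i}) := by
  intro m
  induction m with
  | zero =>
    intro c _ x
    refine ⟨fun _ => x, fun i h => by omega, fun d hd _ => hd, ?_⟩
    refine ⟨LinearEquiv.ofLinear
      (LinearMap.pi fun _ => LinearMap.fst R _ _)
      ((LinearMap.proj 0).prod 0) ?_ ?_⟩
    · refine LinearMap.ext fun f => funext fun i => ?_
      have : i = 0 := Fin.ext (by omega)
      subst this; simp
    · refine LinearMap.ext fun p => ?_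
      obtain ⟨w, z⟩ := p
      have hz : z = 0 := funext fun i => i.elim0
      subst hz; simp
  | succ m ih =>
    intro c hc x
    obtain ⟨g, l, hgx, hgc0, hxl, hc0l, hgcd, ⟨E⟩⟩ := swap_step_aux x (c 0)
    have hctail : DivChainAux (fun i : Fin m => c i.succ) := by
      intro i h
      have := hc (i + 1) (by omega)
      simpa [Fin.succ] using this
    obtain ⟨a', ha'chain, ha'gcd, ⟨E'⟩⟩ := ih (fun i : Fin m => c i.succ) hctail l
    have hga'0 : g ∣ a' 0 := by
      refine ha'gcd g (hgx.trans hxl) fun i => ?_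
      exact hgc0.trans (hc.dvd_of_le (Fin.zero_le _))
    refine ⟨Fin.cons g a', ?_, ?_, ?_⟩
    · intro i h
      match i, h with
      | 0, h =>
        have e0 : (⟨0, by omega⟩ : Fin (m + 2)) = 0 := rfl
        have e1 : (⟨1, h⟩ : Fin (m + 2)) = Fin.succ 0 := rfl
        rw [e0, e1, Fin.cons_zero, Fin.cons_succ]
        exact hga'0
      | i + 1, h =>
        have e1 : (⟨i + 1, by omega⟩ : Fin (m + 2)) = Fin.succ ⟨i, by omega⟩ := rfl
        have e2 : (⟨i + 1 + 1, h⟩ : Fin (m + 2)) = Fin.succ ⟨i + 1, by omega⟩ := rfl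
        rw [e1, e2, Fin.cons_succ, Fin.cons_succ]
        exact ha'chain i (by omega)
    · intro d hdx hdc
      simpa using hgcd d hdx (hdc 0)
    · exact ⟨(LinearEquiv.prodCongr (LinearEquiv.refl R _)
          (piSplitAux fun i : Fin (m+1) => R ⧸ Ideal.span {c i})).trans <|
        (LinearEquiv.prodAssoc R _ _ _).symm.trans <|
        (LinearEquiv.prodCongr E (LinearEquiv.refl R _)).trans <|
        (LinearEquiv.prodAssoc R _ _ _).trans <|
        (LinearEquiv.prodCongr (LinearEquiv.refl R _) E').trans <|
        (LinearEquiv.prodCongr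
          (Submodule.quotEquivOfEq (Ideal.span {g})
            (Ideal.span {(Fin.cons g a' : Fin (m+2) → R) 0}) (by rw [Fin.cons_zero]))
          (LinearEquiv.piCongrRight fun i : Fin (m+1) =>
            Submodule.quotEquivOfEq (Ideal.span {a' i})
              (Ideal.span {(Fin.cons g a' : Fin (m+2) → R) i.succ}) (by rw [Fin.cons_succ]))).trans
        (piSplitAux fun i : Fin (m+2) => R ⧸ Ideal.span {(Fin.cons g a' : Fin (m+2) → R) i}).symm⟩

/-- Any finite product of cyclic modules can be rearranged into one given by a
divisibility chain. -/
lemma sort_chain_aux : ∀ (m : ℕ) (b : Fin m → R),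
    ∃ a : Fin m → R, DivChainAux a ∧
      Nonempty ((∀ i, R ⧸ Ideal.span {b i}) ≃ₗ[R] ∀ i, R ⧸ Ideal.span {a i}) := by
  intro m
  induction m with
  | zero => exact fun b => ⟨b, fun i h => by omega, ⟨LinearEquiv.refl R _⟩⟩
  | succ m ih =>
    intro b
    obtain ⟨a', ha'chain, ⟨E'⟩⟩ := ih (fun i : Fin m => b i.succ)
    obtain ⟨a, hachain, _, ⟨E⟩⟩ := insert_chain_aux m a' ha'chain (b 0)
    refine ⟨a, hachain, ⟨?_⟩⟩
    exact ((piSplitAux fun i : Fin (m+1) => R ⧸ Ideal.span {b i}).trans <|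
      (LinearEquiv.prodCongr (LinearEquiv.refl R _) E').trans E)

end Chain

/-- **Structure theorem for finitely presented modules over a PID.**
A finitely presented module over a principal ideal domain is a finite direct sum
of cyclic modules `R ⧸ (aᵢ)` where each `aᵢ` divides the next one. -/
theorem structure_theorem_finitePresentation_pid
    {R : Type} [CommRing R] [IsDomain R] [IsPrincipalIdealRing R]
    (M : Type) [AddCommGroup M] [Module R M] [Module.FinitePresentation R M] :
    ∃ (n : ℕ) (a : Fin n → R),
      (∀ (i : ℕ) (h : i + 1 < n), a ⟨i, by omega⟩ ∣ a ⟨i + 1, h⟩) ∧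
      Nonempty (M ≃ₗ[R] ((i : Fin n) → R ⧸ Ideal.span {a i})) := by
  classical
  obtain ⟨f, ι, fι, p, hp, e, ⟨eM⟩⟩ :=
    Module.equiv_free_prod_directSum (R := R) (M := M)
  let B : Fin f ⊕ ι → R := Sum.elim (fun _ => (0 : R)) (fun i => p i ^ e i)
  -- `M ≃ Π s : Fin f ⊕ ι, R ⧸ (B s)`
  have Efree : (Fin f →₀ R) ≃ₗ[R] ∀ _ : Fin f, R ⧸ Ideal.span {(0 : R)} :=
    (Finsupp.linearEquivFunOnFinite R R (Fin f)).trans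
      (LinearEquiv.piCongrRight fun _ =>
        (Submodule.quotEquivOfEqBot (Ideal.span {(0 : R)}) (by simp)).symm)
  have Etor : (DirectSum ι fun i => R ⧸ (R ∙ p i ^ e i)) ≃ₗ[R] ∀ i : ι, R ⧸ (R ∙ p i ^ e i) :=
    DirectSum.linearEquivFunOnFintype R ι (fun i => R ⧸ (R ∙ p i ^ e i))
  have E0 : ((Fin f →₀ R) × (DirectSum ι fun i => R ⧸ (R ∙ p i ^ e i))) ≃ₗ[R]
      ∀ s : Fin f ⊕ ι, R ⧸ Ideal.span {B s} :=
    (LinearEquiv.prodCongr Efree Etor).trans (piSumAux fun s => R ⧸ Ideal.span {B s})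
  have E1 : M ≃ₗ[R] ∀ s : Fin f ⊕ ι, R ⧸ Ideal.span {B s} := eM.trans E0
  -- reindex by `Fin n`
  let eqv := Fintype.equivFin (Fin f ⊕ ι)
  obtain ⟨a, hachain, ⟨E3⟩⟩ := sort_chain_aux (Fintype.card (Fin f ⊕ ι))
    (fun j => B (eqv.symm j))
  exact ⟨_, a, hachain,
    ⟨(E1.trans (LinearEquiv.piCongrLeft' R (fun s : Fin f ⊕ ι => R ⧸ Ideal.span {B s}) eqv)).trans
      E3⟩⟩
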